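/- arXiv:0704.0872 — 8 statements merged into one kernel-verified Lean document; each statement's English description precedes it below -/
import Mathlib

section
/- Let T and T₁ be closed, densely defined operators on a Hilbert space H, and let τ be a sesquilinear form on a dense domain D such that both T and T₁ are represented by τ (i.e., D(T), D(T*), D(T₁), D(T₁*) ⊆ D, (Tψ,φ) = τ(ψ,φ) for ψ ∈ D(T), φ ∈ D, (ψ,T*φ) = τ(ψ,φ) for ψ ∈ D, φ ∈ D(T*), and similarly for T₁). Then T = T₁. -/
open scoped InnerProductSpace

private lemma aux_le {H : Type*} [NormedAddCommGroup H] [InnerProductSpace ℂ H] [CompleteSpace H]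
    (D : Submodule ℂ H) (τ : D → D → ℂ) (T T₁ : H →ₗ.[ℂ] H)
    (hT₁closed : T₁.IsClosed) (hT₁dense : Dense (T₁.domain : Set H))
    (hTD : T.domain ≤ D) (hT₁sD : T₁.adjoint.domain ≤ D)
    (hT : ∀ (ψ : T.domain) (φ : D),
      ⟪T ψ, (φ : H)⟫_ℂ = τ (Submodule.inclusion hTD ψ) φ)
    (hT₁s : ∀ (ψ : D) (φ : T₁.adjoint.domain),
      ⟪(ψ : H), T₁.adjoint φ⟫_ℂ = τ ψ (Submodule.inclusion hT₁sD φ)) :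
    T ≤ T₁ := by
  refine LinearPMap.le_of_le_graph ?_
  set E2 := WithLp 2 (H × H)
  set e : E2 ≃ₗ[ℂ] H × H := WithLp.linearEquiv 2 ℂ (H × H)
  set K : Submodule ℂ E2 := T₁.graph.comap e.toLinearMap with hK
  have heK : (K : Set E2) = (WithLp.prodContinuousLinearEquiv 2 ℂ H H) ⁻¹' (T₁.graph : Set (H × H)) := rfl
  have hKclosed : IsClosed (K : Set E2) := by
    rw [heK]
    exact hT₁closed.preimage (WithLp.prodContinuousLinearEquiv 2 ℂ H H).continuous
  have hKK : Kᗮᗮ = K := by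
    rw [Submodule.orthogonal_orthogonal_eq_closure]
    exact hKclosed.submodule_topologicalClosure_eq
  intro x hx
  rw [LinearPMap.mem_graph_iff] at hx
  obtain ⟨ψ, hx1, hx2⟩ := hx
  have hmem : e.symm x ∈ Kᗮᗮ := by
    rw [Submodule.mem_orthogonal']
    intro u hu
    rw [Submodule.mem_orthogonal] at hu
    -- `u.2` lies in the domain of the adjoint of `T₁`, with value `-u.1`.
    have key : ∀ y : T₁.domain, ⟪-(e u).1, (y : H)⟫_ℂ = ⟪(e u).2, T₁ y⟫_ℂ := by
      intro y
      have h1 : ((e.symm ((y : H), T₁ y)) : E2) ∈ K := by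
        show ((y : H), T₁ y) ∈ T₁.graph
        exact T₁.mem_graph y
      have h2 := hu _ h1
      rw [WithLp.prod_inner_apply] at h2
      have h3 : ⟪(y : H), (e u).1⟫_ℂ + ⟪T₁ y, (e u).2⟫_ℂ = 0 := h2
      have h4 := congrArg (starRingEnd ℂ) h3
      simp only [map_add, inner_conj_symm, map_zero] at h4
      rw [inner_neg_left]
      linear_combination -h4
    have hdom : (e u).2 ∈ T₁.adjoint.domain :=
      T₁.mem_adjoint_domain_of_exists _ ⟨-(e u).1, key⟩
    have hval : T₁.adjoint ⟨(e u).2, hdom⟩ = -(e u).1 :=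
      LinearPMap.adjoint_apply_eq hT₁dense _ key
    -- now compute the inner product
    have hx1' : x.1 = (ψ : H) := hx1.symm
    have hx2' : x.2 = T ψ := hx2.symm
    have hcalc : ⟪(e.symm x : E2), u⟫_ℂ = ⟪x.1, (e u).1⟫_ℂ + ⟪x.2, (e u).2⟫_ℂ := by
      rw [WithLp.prod_inner_apply]; rfl
    rw [hcalc, hx1', hx2']
    have hA : ⟪(ψ : H), (e u).1⟫_ℂ = -⟪(ψ : H), T₁.adjoint ⟨(e u).2, hdom⟩⟫_ℂ := by
      rw [hval, inner_neg_right, neg_neg]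
    rw [hA]
    have hB := hT₁s (Submodule.inclusion hTD ψ) ⟨(e u).2, hdom⟩
    have hC := hT ψ (Submodule.inclusion hT₁sD ⟨(e u).2, hdom⟩)
    have hψ : ((Submodule.inclusion hTD ψ : D) : H) = (ψ : H) := rfl
    have hφ : ((Submodule.inclusion hT₁sD (⟨(e u).2, hdom⟩ : T₁.adjoint.domain) : D) : H) = (e u).2 := rfl
    rw [hψ] at hB
    rw [hφ] at hC
    rw [hB, hC]
    ring
  rw [hKK] at hmem
  have : x ∈ T₁.graph := by
    have : e (e.symm x) ∈ T₁.graph := hmem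
    simpa using this
  exact this

/-- Uniqueness of the closed densely defined operator represented by a
sesquilinear form `τ` on a dense domain `D` (Proposition 2.3). -/
theorem stmt_0 {H : Type*} [NormedAddCommGroup H] [InnerProductSpace ℂ H] [CompleteSpace H]
    (D : Submodule ℂ H) (hD : Dense (D : Set H)) (τ : D → D → ℂ)
    (T T₁ : H →ₗ.[ℂ] H)
    (hTclosed : T.IsClosed) (hT₁closed : T₁.IsClosed)
    (hTdense : Dense (T.domain : Set H)) (hT₁dense : Dense (T₁.domain : Set H))
    (hTD : T.domain ≤ D) (hTsD : T.adjoint.domain ≤ D)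
    (hT₁D : T₁.domain ≤ D) (hT₁sD : T₁.adjoint.domain ≤ D)
    (hT : ∀ (ψ : T.domain) (φ : D),
      ⟪T ψ, (φ : H)⟫_ℂ = τ (Submodule.inclusion hTD ψ) φ)
    (hTs : ∀ (ψ : D) (φ : T.adjoint.domain),
      ⟪(ψ : H), T.adjoint φ⟫_ℂ = τ ψ (Submodule.inclusion hTsD φ))
    (hT₁ : ∀ (ψ : T₁.domain) (φ : D),
      ⟪T₁ ψ, (φ : H)⟫_ℂ = τ (Submodule.inclusion hT₁D ψ) φ)
    (hT₁s : ∀ (ψ : D) (φ : T₁.adjoint.domain),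
      ⟪(ψ : H), T₁.adjoint φ⟫_ℂ = τ ψ (Submodule.inclusion hT₁sD φ)) :
    T = T₁ :=
  le_antisymm
    (aux_le D τ T T₁ hT₁closed hT₁dense hTD hT₁sD hT hT₁s)
    (aux_le D τ T₁ T hTclosed hTdense hT₁D hTsD hT₁ hTs)
end

section
/- For real numbers a ≥ 0, b ≥ 0, λ, and η ≠ 0, the supremum over ξ ∈ ℝ of ψ(ξ) = (b|ξ| + a)/√((ξ − λ)² + η²) equals (1/|η|)·√((a + |λ|b)² + b²η²). -/
open Filter

private lemma psi_ub (a b lam eta ξ : ℝ) (ha : 0 ≤ a) (hb : 0 ≤ b) (heta : eta ≠ 0) :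
    (b * |ξ| + a) / Real.sqrt ((ξ - lam) ^ 2 + eta ^ 2) ≤
      (1 / |eta|) * Real.sqrt ((a + |lam| * b) ^ 2 + b ^ 2 * eta ^ 2) := by
  have hE : (0:ℝ) < |eta| := abs_pos.mpr heta
  have hD : (0:ℝ) < (ξ - lam) ^ 2 + eta ^ 2 := by positivity
  have hS : (0:ℝ) < Real.sqrt ((ξ - lam) ^ 2 + eta ^ 2) := Real.sqrt_pos.mpr hD
  rw [div_le_iff₀ hS]
  have h1 : 1 / |eta| * Real.sqrt ((a + |lam| * b) ^ 2 + b ^ 2 * eta ^ 2)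
        * Real.sqrt ((ξ - lam) ^ 2 + eta ^ 2)
      = Real.sqrt (((a + |lam| * b) ^ 2 + b ^ 2 * eta ^ 2) * ((ξ - lam) ^ 2 + eta ^ 2)) / |eta| := by
    rw [Real.sqrt_mul (by positivity)]; ring
  rw [h1, le_div_iff₀ hE, Real.le_sqrt (by positivity) (by positivity)]
  have hX : |ξ| - |lam| ≤ |ξ - lam| := abs_sub_abs_le_abs_sub ξ lam
  have h2 : b * |ξ| + a ≤ b * |ξ - lam| + (a + |lam| * b) := by nlinarith
  have h3 : (b * |ξ| + a) ^ 2 ≤ (b * |ξ - lam| + (a + |lam| * b)) ^ 2 := by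
    apply pow_le_pow_left₀ (by positivity) h2
  have hu2 : |ξ - lam| ^ 2 = (ξ - lam) ^ 2 := sq_abs _
  have he2 : |eta| ^ 2 = eta ^ 2 := sq_abs _
  have h4 : (b * |ξ - lam| + (a + |lam| * b)) ^ 2 * eta ^ 2
      ≤ ((a + |lam| * b) ^ 2 + b ^ 2 * eta ^ 2) * (|ξ - lam| ^ 2 + eta ^ 2) := by
    nlinarith [sq_nonneg ((a + |lam| * b) * |ξ - lam| - b * eta ^ 2)]
  rw [← hu2]
  calc ((b * |ξ| + a) * |eta|) ^ 2 = (b * |ξ| + a) ^ 2 * eta ^ 2 := by rw [mul_pow, he2]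
    _ ≤ (b * |ξ - lam| + (a + |lam| * b)) ^ 2 * eta ^ 2 := by
        apply mul_le_mul_of_nonneg_right h3 (by positivity)
    _ ≤ _ := h4

/-- The supremum of `ψ(ξ) = (b|ξ| + a)/√((ξ − λ)² + η²)` over `ξ ∈ ℝ` equals
`(1/|η|)·√((a + |λ|b)² + b²η²)` (formula (2.23) and its proof in the Appendix). -/
theorem stmt_1 (a b lam eta : ℝ) (ha : 0 ≤ a) (hb : 0 ≤ b) (heta : eta ≠ 0) :
    IsLUB (Set.range fun ξ : ℝ => (b * |ξ| + a) / Real.sqrt ((ξ - lam) ^ 2 + eta ^ 2))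
      ((1 / |eta|) * Real.sqrt ((a + |lam| * b) ^ 2 + b ^ 2 * eta ^ 2)) := by
  have hE : (0:ℝ) < |eta| := abs_pos.mpr heta
  constructor
  · rintro x ⟨ξ, rfl⟩
    exact psi_ub a b lam eta ξ ha hb heta
  · intro u hu
    rcases eq_or_lt_of_le (show (0:ℝ) ≤ a + |lam| * b by positivity) with hc | hc
    · -- degenerate: a = 0 and |lam| * b = 0
      have hlb : 0 ≤ |lam| * b := by positivity
      have ha0 : a = 0 := by nlinarith
      by_cases hb0 : b = 0
      · have hM : (1 / |eta|) * Real.sqrt ((a + |lam| * b) ^ 2 + b ^ 2 * eta ^ 2) = 0 := by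
          rw [ha0, hb0]; simp
        rw [hM]
        have h0 := hu (Set.mem_range_self (0:ℝ))
        simp only [ha0, hb0] at h0
        have : ((0:ℝ) * |(0:ℝ)| + 0) / Real.sqrt (((0:ℝ) - lam) ^ 2 + eta ^ 2) = 0 := by simp
        linarith [this ▸ h0]
      · have hb' : 0 < b := lt_of_le_of_ne hb (Ne.symm hb0)
        have hlam0 : lam = 0 := by
          have h1 : |lam| * b = 0 := by linarith
          have := mul_eq_zero.mp h1
          rcases this with h | h
          · exact abs_eq_zero.mp h
          · exact absurd h hb0
        have hM : (1 / |eta|) * Real.sqrt ((a + |lam| * b) ^ 2 + b ^ 2 * eta ^ 2) = b := by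
          rw [← hc]
          rw [show (0:ℝ) ^ 2 + b ^ 2 * eta ^ 2 = (b * |eta|) ^ 2 by
            rw [mul_pow, sq_abs]; ring]
          rw [Real.sqrt_sq (by positivity)]
          field_simp
        rw [hM]
        -- b is the limit of ψ(ξ) as ξ → ∞
        have hd : Tendsto (fun ξ : ℝ => ξ ^ 2 + eta ^ 2) atTop atTop :=
          tendsto_atTop_add_const_right _ _ (tendsto_pow_atTop (by norm_num))
        have hinv : Tendsto (fun ξ : ℝ => (ξ ^ 2 + eta ^ 2)⁻¹) atTop (nhds 0) :=
          hd.inv_tendsto_atTop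
        have h5 : Tendsto (fun ξ : ℝ => b ^ 2 - b ^ 2 * eta ^ 2 * (ξ ^ 2 + eta ^ 2)⁻¹)
            atTop (nhds (b ^ 2)) := by
          have := (hinv.const_mul (b ^ 2 * eta ^ 2)).const_sub (b ^ 2)
          simpa using this
        have h6 : Tendsto
            (fun ξ : ℝ => Real.sqrt (b ^ 2 - b ^ 2 * eta ^ 2 * (ξ ^ 2 + eta ^ 2)⁻¹))
            atTop (nhds b) := by
          have := (Real.continuous_sqrt.tendsto (b ^ 2)).comp h5
          rwa [Real.sqrt_sq hb] at this
        have h7 : ∀ ξ : ℝ, 0 ≤ ξ →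
            Real.sqrt (b ^ 2 - b ^ 2 * eta ^ 2 * (ξ ^ 2 + eta ^ 2)⁻¹)
              = (b * |ξ| + a) / Real.sqrt ((ξ - lam) ^ 2 + eta ^ 2) := by
          intro ξ hξ
          have hpos : (0:ℝ) < ξ ^ 2 + eta ^ 2 := by positivity
          have harg : b ^ 2 - b ^ 2 * eta ^ 2 * (ξ ^ 2 + eta ^ 2)⁻¹
              = (b * ξ) ^ 2 / (ξ ^ 2 + eta ^ 2) := by
            field_simp
            ring
          rw [harg, Real.sqrt_div (by positivity), Real.sqrt_sq (by positivity),
            ha0, hlam0, abs_of_nonneg hξ]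
          simp
        refine le_of_tendsto h6 ?_
        filter_upwards [eventually_ge_atTop (0:ℝ)] with ξ hξ
        rw [h7 ξ hξ]
        exact hu (Set.mem_range_self ξ)
    · -- attained case: c := a + |lam| * b > 0
      set c := a + |lam| * b with hcdef
      set t := b * eta ^ 2 / c with ht
      have ht0 : 0 ≤ t := by positivity
      set ξ₀ := lam + (if 0 ≤ lam then t else -t) with hxi
      have habs : |ξ₀| = |lam| + t := by
        by_cases h : 0 ≤ lam
        · rw [hxi, if_pos h, abs_of_nonneg (by linarith), abs_of_nonneg h]
        · push_neg at h
          rw [hxi, if_neg (not_le.mpr h), abs_of_nonpos (by linarith), abs_of_neg h]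
          ring
      have hsq : (ξ₀ - lam) ^ 2 = t ^ 2 := by
        by_cases h : 0 ≤ lam
        · rw [hxi, if_pos h]; ring
        · rw [hxi, if_neg h]; ring
      have heq : (b * |ξ₀| + a) / Real.sqrt ((ξ₀ - lam) ^ 2 + eta ^ 2)
          = (1 / |eta|) * Real.sqrt (c ^ 2 + b ^ 2 * eta ^ 2) := by
        rw [habs, hsq]
        have hSpos : (0:ℝ) < Real.sqrt (t ^ 2 + eta ^ 2) :=
          Real.sqrt_pos.mpr (by positivity)
        rw [div_eq_iff hSpos.ne']
        have hr : 1 / |eta| * Real.sqrt (c ^ 2 + b ^ 2 * eta ^ 2)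
              * Real.sqrt (t ^ 2 + eta ^ 2)
            = Real.sqrt ((c ^ 2 + b ^ 2 * eta ^ 2) * (t ^ 2 + eta ^ 2)) / |eta| := by
          rw [Real.sqrt_mul (by positivity)]; ring
        rw [hr, eq_div_iff hE.ne']
        have hnum : b * (|lam| + t) + a = c + b * t := by rw [hcdef]; ring
        rw [hnum]
        have hL : (0:ℝ) ≤ (c + b * t) * |eta| := by positivity
        rw [← Real.sqrt_sq hL]
        congr 1
        have he2 : |eta| ^ 2 = eta ^ 2 := sq_abs eta
        rw [mul_pow, he2, ht]
        field_simp
        ring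
      have := hu (Set.mem_range_self ξ₀)
      rw [heq] at this
      exact this
end

section
/- Let H be a selfadjoint operator on a Hilbert space with a + b|H| positive definite (a, b real, b ≥ 0), and suppose εb < 1 for some ε ∈ [0,1]. Then, via the functional calculus, a + b|H| ≤ a/(1 − εb) + (b/(1 − εb))·|H + ε(a + b|H|)| as an inequality of selfadjoint operators (in the sense of quadratic forms on the form domain). -/
/-- The operator inequality (4.24): via the functional calculus,
`a + b|H| ≤ a/(1 − εb) + (b/(1 − εb))·|H + ε(a + b|H|)|` for a selfadjoint `H`
with `a + b|H|` positive definite, `b ≥ 0`, `ε ∈ [0,1]`, `εb < 1`. -/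
theorem stmt_3 {A : Type*} [CStarAlgebra A] [PartialOrder A] [StarOrderedRing A]
    (H : A) (hH : IsSelfAdjoint H) (a b eps : ℝ) (hb : 0 ≤ b)
    (hpos : ∀ x ∈ spectrum ℝ H, 0 < a + b * |x|)
    (heps0 : 0 ≤ eps) (heps1 : eps ≤ 1) (hebb : eps * b < 1) :
    cfc (fun x : ℝ => a + b * |x|) H ≤
      cfc (fun x : ℝ => a / (1 - eps * b) +
        b * |x + eps * (a + b * |x|)| / (1 - eps * b)) H := by
  refine cfc_mono fun x hx => ?_
  have ht : 0 < a + b * |x| := hpos x hx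
  set t := a + b * |x| with htdef
  have hc : 0 ≤ eps * t := mul_nonneg heps0 ht.le
  have habs : |x| - eps * t ≤ |x + eps * t| := by
    have h1 : |x| - |x + eps * t| ≤ |x - (x + eps * t)| := abs_sub_abs_le_abs_sub _ _
    have h2 : |x - (x + eps * t)| = eps * t := by
      rw [show x - (x + eps * t) = -(eps * t) by ring, abs_neg, abs_of_nonneg hc]
    linarith
  have hd : 0 < 1 - eps * b := by linarith
  rw [← add_div, le_div_iff₀ hd]
  have hbabs : b * (|x| - eps * t) ≤ b * |x + eps * t| := by
    exact mul_le_mul_of_nonneg_left habs hb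
  nlinarith [hbabs]
end

section
/- Let 𝒜 be a unital C*-algebra, a = a* ∈ 𝒜 invertible, and p, q the spectral projections of a belonging to the positive and negative parts of σ(a) respectively, with p, q ≠ 0 and p + q = e. Let b = b* ∈ 𝒜 satisfy pbp = 0 and qbq = 0. Then a + b is invertible in 𝒜. -/
/-- An `if 0 < x` step function is continuous away from `0`. -/
lemma stmt7_aux_contOn (c d : ℝ) :
    ContinuousOn (fun x : ℝ => if 0 < x then c else d) {x : ℝ | x ≠ 0} := by
  intro x hx
  apply ContinuousAt.continuousWithinAt
  rcases lt_or_gt_of_ne (hx : x ≠ 0) with h | h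
  · refine Filter.EventuallyEq.continuousAt (y := d) ?_
    filter_upwards [isOpen_Iio.eventually_mem (show x ∈ Set.Iio (0:ℝ) from h)] with y hy
    exact if_neg (not_lt.mpr (Set.mem_Iio.mp hy).le)
  · refine Filter.EventuallyEq.continuousAt (y := c) ?_
    filter_upwards [isOpen_Ioi.eventually_mem (show x ∈ Set.Ioi (0:ℝ) from h)] with y hy
    exact if_pos (Set.mem_Ioi.mp hy)

/-- Proposition 3.6: in a unital C*-algebra, if `a = a*` is invertible with spectral
projections `p` (positive part) and `q` (negative part), `p, q ≠ 0`, `p + q = 1`, and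
`b = b*` satisfies `pbp = qbq = 0`, then `a + b` is invertible. -/
theorem stmt_7 {A : Type*} [CStarAlgebra A]
    (a b : A) (ha : IsSelfAdjoint a) (hau : IsUnit a) (hb : IsSelfAdjoint b)
    (p q : A)
    (hp : p = cfc (fun x : ℝ => if 0 < x then (1 : ℝ) else 0) a)
    (hq : q = cfc (fun x : ℝ => if x < 0 then (1 : ℝ) else 0) a)
    (hp0 : p ≠ 0) (hq0 : q ≠ 0) (hpq : p + q = 1)
    (hpbp : p * b * p = 0) (hqbq : q * b * q = 0) :
    IsUnit (a + b) := by
  letI := CStarAlgebra.spectralOrder A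
  haveI := CStarAlgebra.spectralOrderedRing A
  -- basic spectral facts
  have hσ : (0 : ℝ) ∉ spectrum ℝ a := spectrum.zero_notMem_iff ℝ |>.mpr hau
  have hσ' : spectrum ℝ a ⊆ {x : ℝ | x ≠ 0} := fun x hx hx0 => hσ (hx0 ▸ hx)
  have hcp : ContinuousOn (fun x : ℝ => if 0 < x then (1:ℝ) else 0) (spectrum ℝ a) :=
    (stmt7_aux_contOn 1 0).mono hσ'
  have hcs : ContinuousOn (fun x : ℝ => if 0 < x then (1:ℝ) else -1) (spectrum ℝ a) :=
    (stmt7_aux_contOn 1 (-1)).mono hσ'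
  -- the sign element s
  set s : A := cfc (fun x : ℝ => if 0 < x then (1:ℝ) else -1) a with hs
  have hs_sa : IsSelfAdjoint s := cfc_predicate _ a
  have hss : s * s = 1 := by
    rw [hs, ← cfc_mul _ _ a hcs hcs]
    calc cfc (fun x : ℝ =>
          (if 0 < x then (1:ℝ) else -1) * (if 0 < x then (1:ℝ) else -1)) a
        = cfc (fun _ : ℝ => (1:ℝ)) a := by
          apply cfc_congr
          intro x _
          by_cases hx0 : 0 < x <;> simp [hx0]
      _ = 1 := cfc_const_one ℝ a
  have hsu : IsUnit s := ⟨⟨s, s, hss, hss⟩, rfl⟩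
  -- s = 2p - 1
  have hs2p : s = 2 * p - 1 := by
    rw [hp, hs]
    rw [show (fun x : ℝ => if 0 < x then (1:ℝ) else -1)
        = fun x : ℝ => (2:ℝ) * (if 0 < x then (1:ℝ) else 0) - 1 from
      funext fun x => by split_ifs <;> norm_num]
    rw [cfc_sub (fun x : ℝ => (2:ℝ) * (if 0 < x then (1:ℝ) else 0)) (fun _ => (1:ℝ)) a
      (continuousOn_const.mul hcp) continuousOn_const, cfc_const_mul _ _ a hcp,
      cfc_const_one ℝ a]
    rw [Algebra.smul_def, map_ofNat]
  -- b is off-diagonal: s b s = -b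
  have hq' : q = 1 - p := eq_sub_of_add_eq' hpq
  have key1 : b - p*b - b*p = 0 := by
    have h2 := hqbq
    rw [hq'] at h2
    have e : (1-p)*b*(1-p) = (b - p*b - b*p) + p*b*p := by noncomm_ring
    rw [e, hpbp, add_zero] at h2
    exact h2
  have key2 : s * b * s = -b := by
    rw [hs2p]
    have e : (2*p-1)*b*(2*p-1) = 4*(p*b*p) + 2*(b - p*b - b*p) - b := by noncomm_ring
    rw [e, hpbp, key1]
    noncomm_ring
  have ksb : s * b = -(b * s) := by
    have h3 : s * b * s * s = (-b) * s := by rw [key2]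
    rw [mul_assoc (s*b) s s, hss, mul_one] at h3
    rw [h3]; noncomm_ring
  -- h = |a|, w = sqrt |a|, r = w⁻¹, all as cfc of a
  have hcw : ContinuousOn (fun x : ℝ => Real.sqrt |x|) (spectrum ℝ a) :=
    (Real.continuous_sqrt.comp continuous_abs).continuousOn
  have hcr : ContinuousOn (fun x : ℝ => (Real.sqrt |x|)⁻¹) (spectrum ℝ a) := by
    intro x hx
    exact (((Real.continuous_sqrt.comp continuous_abs).continuousAt).inv₀
      (ne_of_gt (Real.sqrt_pos.mpr (abs_pos.mpr (hσ' hx))))).continuousWithinAt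
  set h : A := cfc (fun x : ℝ => |x|) a with hh
  set w : A := cfc (fun x : ℝ => Real.sqrt |x|) a with hw
  set r : A := cfc (fun x : ℝ => (Real.sqrt |x|)⁻¹) a with hr
  have hr_sa : IsSelfAdjoint r := cfc_predicate _ a
  have hha : h = s * a := by
    have hmul := cfc_mul (fun x : ℝ => if 0 < x then (1:ℝ) else -1) (fun x : ℝ => x) a
      hcs (continuous_id.continuousOn)
    rw [cfc_id' ℝ a ha] at hmul
    rw [hh, ← hmul]
    apply cfc_congr
    intro x _
    by_cases hx0 : 0 < x
    · simp [hx0, abs_of_pos hx0]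
    · simp [hx0, abs_of_nonpos (not_lt.mp hx0)]
  have hwr : w * r = 1 := by
    rw [hw, hr, ← cfc_mul _ _ a hcw hcr]
    calc cfc (fun x : ℝ => Real.sqrt |x| * (Real.sqrt |x|)⁻¹) a
        = cfc (fun _ : ℝ => (1:ℝ)) a := by
          apply cfc_congr
          intro x hx
          exact mul_inv_cancel₀ (ne_of_gt (Real.sqrt_pos.mpr (abs_pos.mpr (hσ' hx))))
      _ = 1 := cfc_const_one ℝ a
  have hrw : r * w = 1 := by
    rw [hw, hr, ← cfc_mul _ _ a hcr hcw]
    calc cfc (fun x : ℝ => (Real.sqrt |x|)⁻¹ * Real.sqrt |x|) a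
        = cfc (fun _ : ℝ => (1:ℝ)) a := by
          apply cfc_congr
          intro x hx
          exact inv_mul_cancel₀ (ne_of_gt (Real.sqrt_pos.mpr (abs_pos.mpr (hσ' hx))))
      _ = 1 := cfc_const_one ℝ a
  have hwu : IsUnit w := ⟨⟨w, r, hwr, hrw⟩, rfl⟩
  have hww : w * w = h := by
    rw [hw, hh, ← cfc_mul _ _ a hcw hcw]
    apply cfc_congr
    intro x _
    exact Real.mul_self_sqrt (abs_nonneg x)
  -- k = s b is skew-adjoint
  set k : A := s * b with hk
  have hk_star : star k = -k := by
    have hsb : s * b = -(b * s) := by rw [← hk]; exact ksb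
    rw [hk, star_mul, hb.star_eq, hs_sa.star_eq, hsb]
    exact (neg_neg _).symm
  -- m = r k r is skew-adjoint
  set m : A := r * k * r with hm
  have hm_star : star m = -m := by
    rw [hm, star_mul, star_mul, hr_sa.star_eq, hk_star]
    noncomm_ring
  -- 1 + m is a unit
  have hu1 : IsUnit (1 - m * m) := by
    have e : 1 - m*m = 1 + star m * m := by rw [hm_star]; noncomm_ring
    rw [e]
    exact CStarAlgebra.isUnit_of_le 1
      (le_add_of_nonneg_right (star_mul_self_nonneg m)) isStrictlyPositive_one
  have hu2 : IsUnit (1 + m) := by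
    obtain ⟨u, hu⟩ := hu1
    have hcomm : Commute m ↑u := by
      rw [hu]
      show m * (1 - m*m) = (1 - m*m) * m
      noncomm_ring
    have hcomm' : Commute m ↑u⁻¹ := hcomm.units_inv_right
    refine ⟨⟨1 + m, (1 - m) * ↑u⁻¹, ?_, ?_⟩, rfl⟩
    · have e : (1 + m) * ((1 - m) * ↑u⁻¹) = ((1+m)*(1-m)) * ↑u⁻¹ := by noncomm_ring
      rw [e, show (1+m)*(1-m) = 1 - m*m by noncomm_ring, ← hu, Units.mul_inv]
    · have e : ((1 - m) * ↑u⁻¹) * (1 + m)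
          = (1 - m) * ((↑u⁻¹ : A) * m) + (1-m) * ↑u⁻¹ := by noncomm_ring
      rw [e, ← hcomm'.eq]
      have e2 : (1 - m) * (m * ↑u⁻¹) + (1-m) * ↑u⁻¹ = ((1-m)*(1+m)) * ↑u⁻¹ := by
        noncomm_ring
      rw [e2, show (1-m)*(1+m) = 1 - m*m by noncomm_ring, ← hu, Units.mul_inv]
  -- h + k = w (1 + m) w is a unit
  have hfact : w * (1 + m) * w = h + k := by
    rw [hm]
    have e : w * (1 + r*k*r) * w = w*w + (w*r) * (k * (r*w)) := by noncomm_ring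
    rw [e, hww, hwr, hrw, one_mul, mul_one]
  have hhk : IsUnit (h + k) := hfact ▸ (hwu.mul hu2).mul hwu
  -- conclude
  have hfin : s * (h + k) = a + b := by
    rw [hha, hk, mul_add, ← mul_assoc, ← mul_assoc, hss, one_mul, one_mul]
  exact hfin ▸ hsu.mul hhk
end

section
/- Let H be a selfadjoint operator, H₁ = a + b|H| positive definite with 0 ≤ b < 1, and ζ = λ + iη with |η| > (a + |λ|b)/√(1 − b²). Then ‖H₁(H − ζ)⁻¹‖ < 1. -/
/-- Theorem 2.7 (key estimate): for a selfadjoint `H` with `H₁ = a + b|H|` positive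
definite, `0 ≤ b < 1`, and `ζ = λ + iη` with `|η| > (a + |λ|b)/√(1 − b²)`, the operator
`H − ζ` is invertible and `‖H₁(H − ζ)⁻¹‖ < 1`. -/
theorem stmt_12 {E : Type*} [NormedAddCommGroup E] [InnerProductSpace ℂ E] [CompleteSpace E]
    (H : E →L[ℂ] E) (hH : IsSelfAdjoint H)
    (a b lam eta : ℝ) (ha : 0 ≤ a) (hb0 : 0 ≤ b) (hb : b < 1)
    (hpos : ∀ x ∈ spectrum ℝ H, 0 < a + b * |x|)
    (zeta : ℂ) (hzeta : zeta = (lam : ℂ) + (eta : ℂ) * Complex.I)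
    (heta : |eta| > (a + |lam| * b) / Real.sqrt (1 - b ^ 2)) :
    IsUnit (H - zeta • (1 : E →L[ℂ] E)) ∧
      ‖cfc (fun x : ℝ => a + b * |x|) H * Ring.inverse (H - zeta • (1 : E →L[ℂ] E))‖ < 1 := by
  have hb2 : (0:ℝ) < 1 - b ^ 2 := by nlinarith
  have hs : (0:ℝ) < Real.sqrt (1 - b ^ 2) := Real.sqrt_pos.mpr hb2
  have hc : (0:ℝ) ≤ a + |lam| * b := by positivity
  have heta2 : (a + |lam| * b) ^ 2 < (1 - b ^ 2) * eta ^ 2 := by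
    have h1 : a + |lam| * b < |eta| * Real.sqrt (1 - b ^ 2) := by
      rwa [gt_iff_lt, div_lt_iff₀ hs] at heta
    have h2 : (a + |lam| * b)^2 < (|eta| * Real.sqrt (1 - b ^ 2))^2 :=
      pow_lt_pow_left₀ h1 hc two_ne_zero
    calc (a + |lam| * b) ^ 2 < (|eta| * Real.sqrt (1 - b ^ 2))^2 := h2
      _ = (1 - b ^ 2) * eta ^ 2 := by
          rw [mul_pow, Real.sq_sqrt hb2.le, sq_abs]; ring
  have hetane : eta ≠ 0 := by
    intro h
    rw [h] at heta2
    nlinarith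
  have hzim : zeta.im = eta := by simp [hzeta]
  -- ζ not in spectrum
  have hzspec : zeta ∉ spectrum ℂ H := by
    intro hmem
    have h := hH.mem_spectrum_eq_re hmem
    apply hetane
    have h2 : zeta.im = 0 := by rw [h]; simp
    rwa [hzim] at h2
  have hunit : IsUnit (H - zeta • (1 : E →L[ℂ] E)) := by
    rw [spectrum.notMem_iff] at hzspec
    have := hzspec.neg
    simpa [Algebra.algebraMap_eq_smul_one, neg_sub] using this
  refine ⟨hunit, ?_⟩
  -- key pointwise estimate
  have key : ∀ x : ℝ, (a + b * |x|) ^ 2 < (x - lam) ^ 2 + eta ^ 2 := by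
    intro x
    have h1 : (|x| - |lam|) ^ 2 ≤ (x - lam) ^ 2 := by
      have h2 : |(|x| - |lam|)| ≤ |x - lam| := abs_abs_sub_abs_le_abs_sub x lam
      calc (|x| - |lam|)^2 = |(|x| - |lam|)|^2 := (sq_abs _).symm
        _ ≤ |x - lam|^2 := pow_le_pow_left₀ (abs_nonneg _) h2 2
        _ = (x - lam)^2 := sq_abs _
    nlinarith [sq_nonneg ((1 - b^2) * |x| - (a * b + |lam|)), abs_nonneg x, abs_nonneg lam,
      mul_le_mul_of_nonneg_left h1 hb2.le]
  -- rewrite in terms of cfc over ℂ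
  have hN : IsStarNormal H := hH.isStarNormal
  have hne : ∀ z ∈ spectrum ℂ H, z - zeta ≠ 0 := by
    intro z hz hz0
    rw [sub_eq_zero] at hz0
    exact hzspec (hz0 ▸ hz)
  have hcont1 : ContinuousOn (fun z : ℂ => z - zeta) (spectrum ℂ H) :=
    (continuous_id.sub continuous_const).continuousOn
  have hfg : H - zeta • (1 : E →L[ℂ] E) = cfc (fun z : ℂ => z - zeta) H := by
    rw [cfc_sub (fun z : ℂ => z) (fun _ => zeta) H, cfc_id' ℂ H, cfc_const zeta H,
      Algebra.algebraMap_eq_smul_one]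
  have hinv : Ring.inverse (H - zeta • (1 : E →L[ℂ] E)) =
      cfc (fun z : ℂ => (z - zeta)⁻¹) H := by
    rw [hfg, ← cfc_inv (fun z : ℂ => z - zeta) H hne hcont1 hN]
  have hcont2 : ContinuousOn (fun z : ℂ => ((a + b * |z.re| : ℝ) : ℂ)) (spectrum ℂ H) :=
    (Complex.continuous_ofReal.comp (continuous_const.add
      (continuous_const.mul (continuous_abs.comp Complex.continuous_re)))).continuousOn
  have hcont3 : ContinuousOn (fun z : ℂ => (z - zeta)⁻¹) (spectrum ℂ H) :=
    hcont1.inv₀ hne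
  rw [hinv, cfc_real_eq_complex (fun x => a + b * |x|) hH,
    ← cfc_mul (fun z : ℂ => ((a + b * |z.re| : ℝ) : ℂ)) (fun z : ℂ => (z - zeta)⁻¹) H hcont2 hcont3]
  apply norm_cfc_lt one_pos
  intro z hz
  have hzre : z = (z.re : ℂ) := hH.mem_spectrum_eq_re hz
  set x := z.re with hx
  have hnum : (0:ℝ) ≤ a + b * |x| := by positivity
  have hnorm2 : ‖z - zeta‖ ^ 2 = (x - lam) ^ 2 + eta ^ 2 := by
    rw [hzre, hzeta]
    rw [Complex.sq_norm, Complex.normSq_apply]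
    simp
    ring
  have hlt : a + b * |x| < ‖z - zeta‖ := by
    have := key x
    rw [← hnorm2] at this
    exact lt_of_pow_lt_pow_left₀ 2 (norm_nonneg _) this
  have hpos' : (0:ℝ) < ‖z - zeta‖ := hnum.trans_lt hlt
  calc ‖((a + b * |x| : ℝ) : ℂ) * (z - zeta)⁻¹‖ = (a + b * |x|) * ‖z - zeta‖⁻¹ := by
        rw [norm_mul, norm_inv, Complex.norm_real, Real.norm_eq_abs, abs_of_nonneg hnum]
    _ < 1 := by
        rw [← div_eq_mul_inv, div_lt_one hpos']
        exact hlt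
end

section
/- Let H be an n×n Hermitian matrix with eigenvalues λ₁ ≥ … ≥ λₙ and A Hermitian with |⟨Aψ,ψ⟩| ≤ a‖ψ‖² + b⟨|H|ψ,ψ⟩ for all ψ, where b < 1. Then the eigenvalues μ₁ ≥ … ≥ μₙ of T = H + A satisfy |μₖ − λₖ| ≤ a + b|λₖ| for each k. -/
open Matrix
open scoped ComplexOrder

/-- The square root of a positive semidefinite matrix, as `Matrix.PosSemidef.sqrt` was defined
in the older Mathlib (it has since been removed). -/
noncomputable def Matrix.PosSemidef.sqrt {n : Type*} [Fintype n] [DecidableEq n] {𝕜 : Type*}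
    [RCLike 𝕜] {A : Matrix n n 𝕜} (hA : A.PosSemidef) : Matrix n n 𝕜 :=
  hA.isHermitian.eigenvectorUnitary.1 *
    diagonal ((↑) ∘ (fun x : ℝ => Real.sqrt x) ∘ hA.isHermitian.eigenvalues) *
      (star hA.isHermitian.eigenvectorUnitary : Matrix n n 𝕜)

section sqrtaux
open scoped MatrixOrder

lemma Matrix.PosSemidef.sqrt_eq_cfcSqrt {m : Type*} [Fintype m] [DecidableEq m]
    {A : Matrix m m ℂ} (hA : A.PosSemidef) : hA.sqrt = CFC.sqrt A := by
  rw [CFC.sqrt_eq_cfc, cfc_nnreal_eq_real _ A hA.nonneg, hA.1.cfc_eq]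
  simp only [IsHermitian.cfc, Matrix.PosSemidef.sqrt, Unitary.conjStarAlgAut_apply]
  congr 3
  funext i
  simp only [Function.comp_apply, Real.coe_sqrt, Real.coe_toNNReal']
  rw [max_eq_left (hA.eigenvalues_nonneg i)]

lemma Matrix.PosSemidef.posSemidef_sqrt {m : Type*} [Fintype m] [DecidableEq m]
    {A : Matrix m m ℂ} (hA : A.PosSemidef) : hA.sqrt.PosSemidef := by
  rw [hA.sqrt_eq_cfcSqrt]
  exact (CFC.sqrt_nonneg A).posSemidef

lemma Matrix.PosSemidef.eq_sqrt_of_sq_eq {m : Type*} [Fintype m] [DecidableEq m]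
    {A B : Matrix m m ℂ} (hB : B.PosSemidef) (hA : A.PosSemidef) (hBA : B ^ 2 = A) :
    B = hA.sqrt := by
  rw [hA.sqrt_eq_cfcSqrt]
  exact (CFC.sqrt_unique (by rw [← sq]; exact hBA) hB.nonneg).symm

end sqrtaux

open Matrix Submodule
open scoped ComplexOrder InnerProductSpace

section auxlemmas
variable {n : ℕ}

private lemma aux_quad (M : Matrix (Fin n) (Fin n) ℂ) (hM : M.IsHermitian)
    (b : OrthonormalBasis (Fin n) ℂ (EuclideanSpace ℂ (Fin n))) (c : Fin n → ℝ)
    (heig : ∀ j, M *ᵥ ⇑(b j) = c j • ⇑(b j)) (ψ : EuclideanSpace ℂ (Fin n)) :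
    (dotProduct (star (⇑ψ : Fin n → ℂ)) (M *ᵥ ⇑ψ)).re
      = ∑ j, c j * ‖b.repr ψ j‖ ^ 2 := by
  set T := Matrix.toEuclideanLin M with hT
  have hsym : T.IsSymmetric := (Matrix.isHermitian_iff_isSymmetric.mp hM)
  have hTapp : ∀ φ : EuclideanSpace ℂ (Fin n), ⇑(T φ) = M *ᵥ ⇑φ := by
    intro φ; rfl
  have heig' : ∀ j, T (b j) = (c j : ℂ) • b j := by
    intro j
    apply (WithLp.equiv 2 _).injective
    ext i
    have := congrFun (heig j) i
    simpa [hTapp] using this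
  have key : ⟪ψ, T ψ⟫_ℂ = ∑ j, (starRingEnd ℂ) (b.repr ψ j) * ((c j : ℂ) * b.repr ψ j) := by
    nth_rewrite 1 [← b.sum_repr ψ]
    rw [sum_inner]
    congr 1; funext j
    rw [inner_smul_left, ← hsym (b j) ψ, heig' j, inner_smul_left, b.repr_apply_apply]
    simp [mul_comm, mul_assoc, Complex.conj_ofReal]
  have hdot : (dotProduct (star (⇑ψ : Fin n → ℂ)) (M *ᵥ ⇑ψ)) = ⟪ψ, T ψ⟫_ℂ := by
    rw [EuclideanSpace.inner_eq_star_dotProduct, dotProduct_comm]; rfl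
  rw [hdot, key, Complex.re_sum]
  congr 1; funext j
  have : (starRingEnd ℂ) (b.repr ψ j) * ((c j : ℂ) * b.repr ψ j)
      = (c j : ℂ) * ((‖b.repr ψ j‖ : ℝ) ^ 2 : ℝ) := by
    rw [mul_left_comm, Complex.conj_mul']
    push_cast
    ring
  rw [this]
  norm_cast

private lemma aux_norm (b : OrthonormalBasis (Fin n) ℂ (EuclideanSpace ℂ (Fin n)))
    (ψ : EuclideanSpace ℂ (Fin n)) :
    ‖ψ‖ ^ 2 = ∑ j, ‖b.repr ψ j‖ ^ 2 := by
  rw [← b.repr.norm_map ψ]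
  rw [EuclideanSpace.norm_eq, Real.sq_sqrt (by positivity)]

private lemma aux_vanish (b : OrthonormalBasis (Fin n) ℂ (EuclideanSpace ℂ (Fin n)))
    (s : Finset (Fin n))
    {ψ : EuclideanSpace ℂ (Fin n)} (hψ : ψ ∈ span ℂ (⇑b '' ↑s)) {i : Fin n} (hi : i ∉ s) :
    b.repr ψ i = 0 := by
  rw [b.repr_apply_apply]
  induction hψ using Submodule.span_induction with
  | mem x hx =>
      obtain ⟨j, hj, rfl⟩ := hx
      exact b.orthonormal.2 (fun h => hi (h ▸ hj))
  | zero => simp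
  | add x y _ _ hx hy => rw [inner_add_right, hx, hy, add_zero]
  | smul c x _ hx => rw [inner_smul_right, hx, mul_zero]

private lemma aux_le_s13 (M : Matrix (Fin n) (Fin n) ℂ) (hM : M.IsHermitian)
    (b : OrthonormalBasis (Fin n) ℂ (EuclideanSpace ℂ (Fin n))) (c : Fin n → ℝ)
    (heig : ∀ j, M *ᵥ ⇑(b j) = c j • ⇑(b j)) (s : Finset (Fin n)) (C : ℝ)
    (hC : ∀ i ∈ s, c i ≤ C)
    {ψ : EuclideanSpace ℂ (Fin n)} (hψ : ψ ∈ span ℂ (⇑b '' ↑s)) :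
    (dotProduct (star (⇑ψ : Fin n → ℂ)) (M *ᵥ ⇑ψ)).re ≤ C * ‖ψ‖ ^ 2 := by
  have hvan : ∀ {i : Fin n}, i ∉ s → b.repr ψ i = 0 := fun hi => aux_vanish b s hψ hi
  have hsum : ∀ c' : Fin n → ℝ,
      ∑ j, c' j * ‖b.repr ψ j‖ ^ 2 = ∑ j ∈ s, c' j * ‖b.repr ψ j‖ ^ 2 := by
    intro c'
    refine (Finset.sum_subset (Finset.subset_univ s) ?_).symm
    intro i _ hi
    rw [hvan hi]
    simp
  rw [aux_quad M hM b c heig ψ, hsum c]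
  have hnorm : C * ‖ψ‖ ^ 2 = ∑ j ∈ s, C * ‖b.repr ψ j‖ ^ 2 := by
    rw [← Finset.mul_sum, aux_norm b ψ]
    congr 1
    simpa using hsum (fun _ => 1)
  rw [hnorm]
  exact Finset.sum_le_sum fun i hi =>
    mul_le_mul_of_nonneg_right (hC i hi) (by positivity)

private lemma aux_ge (M : Matrix (Fin n) (Fin n) ℂ) (hM : M.IsHermitian)
    (b : OrthonormalBasis (Fin n) ℂ (EuclideanSpace ℂ (Fin n))) (c : Fin n → ℝ)
    (heig : ∀ j, M *ᵥ ⇑(b j) = c j • ⇑(b j)) (s : Finset (Fin n)) (C : ℝ)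
    (hC : ∀ i ∈ s, C ≤ c i)
    {ψ : EuclideanSpace ℂ (Fin n)} (hψ : ψ ∈ span ℂ (⇑b '' ↑s)) :
    C * ‖ψ‖ ^ 2 ≤ (dotProduct (star (⇑ψ : Fin n → ℂ)) (M *ᵥ ⇑ψ)).re := by
  have h := aux_le_s13 (-M) (by simpa [Matrix.IsHermitian] using congrArg Neg.neg hM.eq)
    b (fun j => -(c j)) (fun j => by rw [Matrix.neg_mulVec, heig j, neg_smul]) s (-C)
    (fun i hi => neg_le_neg (hC i hi)) hψ
  have hneg : (dotProduct (star (⇑ψ : Fin n → ℂ)) ((-M) *ᵥ ⇑ψ)).re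
      = -(dotProduct (star (⇑ψ : Fin n → ℂ)) (M *ᵥ ⇑ψ)).re := by
    rw [Matrix.neg_mulVec, dotProduct_neg, Complex.neg_re]
  rw [hneg] at h
  linarith

private lemma aux_key (b₁ b₂ : OrthonormalBasis (Fin n) ℂ (EuclideanSpace ℂ (Fin n)))
    (s t : Finset (Fin n)) (hcard : n < s.card + t.card)
    (f : EuclideanSpace ℂ (Fin n) → ℝ) (C D : ℝ)
    (h1 : ∀ ψ : EuclideanSpace ℂ (Fin n), ψ ∈ span ℂ (⇑b₁ '' ↑s) → f ψ ≤ C * ‖ψ‖ ^ 2)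
    (h2 : ∀ ψ : EuclideanSpace ℂ (Fin n), ψ ∈ span ℂ (⇑b₂ '' ↑t) → D * ‖ψ‖ ^ 2 ≤ f ψ) :
    D ≤ C := by
  have hdim : ∀ (b : OrthonormalBasis (Fin n) ℂ (EuclideanSpace ℂ (Fin n)))
      (u : Finset (Fin n)), Module.finrank ℂ (span ℂ (⇑b '' ↑u)) = u.card := by
    intro b u
    have hon : Orthonormal ℂ (fun i : u => b i) :=
      b.orthonormal.comp _ Subtype.val_injective
    have hli := hon.linearIndependent
    have : Set.range (fun i : u => b i) = ⇑b '' ↑u := by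
      ext x; simp
    rw [← this, finrank_span_eq_card hli, Fintype.card_coe]
  set V := span ℂ (⇑b₁ '' ↑s)
  set W := span ℂ (⇑b₂ '' ↑t)
  have hVW : 0 < Module.finrank ℂ ↥(V ⊓ W) := by
    by_contra h
    push_neg at h
    have h0 : Module.finrank ℂ ↥(V ⊓ W) = 0 := Nat.le_zero.mp h
    have := Submodule.finrank_sup_add_finrank_inf_eq V W
    rw [h0, add_zero] at this
    have hle : Module.finrank ℂ ↥(V ⊔ W) ≤ n := by
      simpa [finrank_euclideanSpace_fin] using Submodule.finrank_le (V ⊔ W)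
    rw [hdim b₁ s, hdim b₂ t] at this
    omega
  have hne : V ⊓ W ≠ ⊥ := by
    intro h
    rw [h, finrank_bot] at hVW
    exact lt_irrefl 0 hVW
  obtain ⟨ψ, hψmem, hψne⟩ := Submodule.exists_mem_ne_zero_of_ne_bot hne
  have hnorm : 0 < ‖ψ‖ ^ 2 := by have := norm_pos_iff.mpr hψne; positivity
  have := le_trans (h2 ψ hψmem.2) (h1 ψ hψmem.1)
  exact le_of_mul_le_mul_right (by linarith) hnorm

private lemma aux_absH (H : Matrix (Fin n) (Fin n) ℂ) (hH : H.IsHermitian) :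
    (Matrix.posSemidef_conjTranspose_mul_self H).sqrt
      = (hH.eigenvectorUnitary : Matrix (Fin n) (Fin n) ℂ)
        * diagonal (Complex.ofReal ∘ fun i => |hH.eigenvalues i|)
        * star (hH.eigenvectorUnitary : Matrix (Fin n) (Fin n) ℂ) := by
  set U := (hH.eigenvectorUnitary : Matrix (Fin n) (Fin n) ℂ) with hU
  set D := diagonal (Complex.ofReal ∘ fun i => |hH.eigenvalues i|) with hD
  have hUU : star U * U = 1 := by
    rw [hU]
    exact Unitary.coe_star_mul_self hH.eigenvectorUnitary
  have hBpsd : (U * D * star U).PosSemidef := by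
    have hDpsd : D.PosSemidef := by
      rw [hD]
      refine posSemidef_diagonal_iff.mpr fun i => ?_
      simp only [Function.comp_apply]
      rw [Complex.zero_le_real]
      exact abs_nonneg _
    have := hDpsd.mul_mul_conjTranspose_same U
    simpa [Matrix.star_eq_conjTranspose, mul_assoc] using this
  have habs2 : (fun i => (Complex.ofReal ∘ fun i => |hH.eigenvalues i|) i
      * (Complex.ofReal ∘ fun i => |hH.eigenvalues i|) i)
      = (Complex.ofReal ∘ fun i => hH.eigenvalues i ^ 2) := by
    funext i
    simp only [Function.comp_apply]
    rw [← Complex.ofReal_mul, abs_mul_abs_self]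
    push_cast
    ring
  have hsq : (U * D * star U) ^ 2 = Hᴴ * H := by
    have h1 : (U * D * star U) ^ 2 = U * (D * D) * star U := by
      rw [pow_two]
      simp only [Matrix.mul_assoc]
      rw [← Matrix.mul_assoc (star U) U, hUU, Matrix.one_mul]
    have h2 : D * D = diagonal (Complex.ofReal ∘ fun i => hH.eigenvalues i ^ 2) := by
      rw [hD, diagonal_mul_diagonal, habs2]
    have h3 : Hᴴ * H = U * diagonal (Complex.ofReal ∘ fun i => hH.eigenvalues i ^ 2) * star U := by
      rw [hH.eq]
      conv_lhs => rw [hH.spectral_theorem, Unitary.conjStarAlgAut_apply]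
      simp only [Matrix.mul_assoc]
      rw [← Matrix.mul_assoc (star U) U, hUU, Matrix.one_mul,
        ← Matrix.mul_assoc (diagonal _) (diagonal _), diagonal_mul_diagonal]
      have : (fun i => (RCLike.ofReal ∘ hH.eigenvalues : Fin n → ℂ) i
            * (RCLike.ofReal ∘ hH.eigenvalues) i)
          = (Complex.ofReal ∘ fun i => hH.eigenvalues i ^ 2) := by
        funext i
        simp only [Function.comp_apply]
        rw [sq]
        norm_cast
      rw [this]
    rw [h1, h2, h3]
  exact (hBpsd.eq_sqrt_of_sq_eq (Matrix.posSemidef_conjTranspose_mul_self H) hsq).symm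

private lemma aux_absH_mulVec (H : Matrix (Fin n) (Fin n) ℂ) (hH : H.IsHermitian) (j : Fin n) :
    (Matrix.posSemidef_conjTranspose_mul_self H).sqrt *ᵥ ⇑(hH.eigenvectorBasis j)
      = |hH.eigenvalues j| • ⇑(hH.eigenvectorBasis j) := by
  rw [aux_absH H hH]
  rw [← mulVec_mulVec, ← mulVec_mulVec, hH.star_eigenvectorUnitary_mulVec j]
  rw [Matrix.diagonal_mulVec_single]
  have : Pi.single (M := fun _ : Fin n => ℂ) j ((Complex.ofReal ∘ fun i => |hH.eigenvalues i|) j * 1)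
      = (|hH.eigenvalues j| : ℝ) • Pi.single (M := fun _ : Fin n => ℂ) j 1 := by
    funext i
    by_cases h : i = j <;> simp [h, Pi.single_apply, Complex.real_smul]
  rw [this, mulVec_smul, hH.eigenvectorUnitary_mulVec]

end auxlemmas

/-- The eigenvalue bound (1.7)/(1.8) for Hermitian matrices: if
`|⟨Aψ,ψ⟩| ≤ a‖ψ‖² + b⟨|H|ψ,ψ⟩` with `b < 1`, then the non-increasingly ordered
eigenvalues of `H` and `T = H + A` satisfy `|μₖ − λₖ| ≤ a + b|λₖ|`. -/
theorem stmt_13 {n : ℕ} (H A : Matrix (Fin n) (Fin n) ℂ)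
    (hH : H.IsHermitian) (hA : A.IsHermitian) (hT : (H + A).IsHermitian)
    (a b : ℝ) (ha : 0 ≤ a) (hb0 : 0 ≤ b) (hb : b < 1)
    (absH : Matrix (Fin n) (Fin n) ℂ)
    (habsH : absH = (Matrix.posSemidef_conjTranspose_mul_self H).sqrt)
    (hbound : ∀ ψ : Fin n → ℂ,
      ‖dotProduct (star ψ) (A.mulVec ψ)‖ ≤
        a * (dotProduct (star ψ) ψ).re +
          b * (dotProduct (star ψ) (absH.mulVec ψ)).re)
    (lam mu : Fin n → ℝ) (hlam : Antitone lam) (hmu : Antitone mu)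
    (hlam' : ∃ σ : Equiv.Perm (Fin n), lam = hH.eigenvalues ∘ σ)
    (hmu' : ∃ σ : Equiv.Perm (Fin n), mu = hT.eigenvalues ∘ σ) :
    ∀ k : Fin n, |mu k - lam k| ≤ a + b * |lam k| := by
  obtain ⟨σ, hσ⟩ := hlam'
  obtain ⟨τ, hτ⟩ := hmu'
  -- sorted orthonormal eigenbases
  set b₁ : OrthonormalBasis (Fin n) ℂ (EuclideanSpace ℂ (Fin n)) :=
    hH.eigenvectorBasis.reindex σ.symm with hb₁
  set b₂ : OrthonormalBasis (Fin n) ℂ (EuclideanSpace ℂ (Fin n)) :=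
    hT.eigenvectorBasis.reindex τ.symm with hb₂
  have hb₁app : ∀ i, b₁ i = hH.eigenvectorBasis (σ i) := by
    intro i; rw [hb₁, OrthonormalBasis.reindex_apply, Equiv.symm_symm]
  have hb₂app : ∀ i, b₂ i = hT.eigenvectorBasis (τ i) := by
    intro i; rw [hb₂, OrthonormalBasis.reindex_apply, Equiv.symm_symm]
  -- eigen equations
  have heigH : ∀ i, H *ᵥ ⇑(b₁ i) = lam i • ⇑(b₁ i) := by
    intro i
    rw [hb₁app i, hσ]
    exact hH.mulVec_eigenvectorBasis (σ i)
  have heigAbs : ∀ i, absH *ᵥ ⇑(b₁ i) = |lam i| • ⇑(b₁ i) := by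
    intro i
    rw [hb₁app i, hσ, habsH]
    simpa using aux_absH_mulVec H hH (σ i)
  have heigT : ∀ i, (H + A) *ᵥ ⇑(b₂ i) = mu i • ⇑(b₂ i) := by
    intro i
    rw [hb₂app i, hτ]
    exact hT.mulVec_eigenvectorBasis (τ i)
  -- absH is Hermitian
  have hAbsHerm : absH.IsHermitian := by
    rw [habsH]
    exact (Matrix.posSemidef_conjTranspose_mul_self H).posSemidef_sqrt.1
  -- the perturbed matrices M± = H ± b•absH
  have hsmulHerm : ((b : ℂ) • absH).IsHermitian := by
    rw [Matrix.IsHermitian, Matrix.conjTranspose_smul, hAbsHerm.eq]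
    congr 1
    simp [Complex.conj_ofReal]
  have heigMp : ∀ i, (H + (b : ℂ) • absH) *ᵥ ⇑(b₁ i)
      = (lam i + b * |lam i|) • ⇑(b₁ i) := by
    intro i
    rw [Matrix.add_mulVec, heigH i, Matrix.smul_mulVec, heigAbs i]
    funext x
    simp [Complex.real_smul]
    ring
  have heigMm : ∀ i, (H - (b : ℂ) • absH) *ᵥ ⇑(b₁ i)
      = (lam i - b * |lam i|) • ⇑(b₁ i) := by
    intro i
    rw [Matrix.sub_mulVec, heigH i, Matrix.smul_mulVec, heigAbs i]
    funext x
    simp [Complex.real_smul]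
    ring
  -- monotonicity of x ± b|x|
  have hmono : ∀ x y : ℝ, x ≤ y → x + b * |x| ≤ y + b * |y| ∧ x - b * |x| ≤ y - b * |y| := by
    intro x y h
    constructor <;>
      (rcases abs_cases x with ⟨h1, h2⟩ | ⟨h1, h2⟩ <;>
        rcases abs_cases y with ⟨h3, h4⟩ | ⟨h3, h4⟩ <;> nlinarith)
  -- dot products and norms
  have hdotnorm : ∀ ψ : EuclideanSpace ℂ (Fin n),
      (dotProduct (star (⇑ψ : Fin n → ℂ)) ⇑ψ).re = ‖ψ‖ ^ 2 := by
    intro ψ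
    have : (dotProduct (star (⇑ψ : Fin n → ℂ)) ⇑ψ) = ⟪ψ, ψ⟫_ℂ := by
      rw [EuclideanSpace.inner_eq_star_dotProduct, dotProduct_comm]
    rw [this, inner_self_eq_norm_sq_to_K]
    norm_cast
  set f : EuclideanSpace ℂ (Fin n) → ℝ :=
    fun ψ => (dotProduct (star (⇑ψ : Fin n → ℂ)) ((H + A) *ᵥ ⇑ψ)).re with hf
  -- decomposition of f
  have hfsplit : ∀ ψ : EuclideanSpace ℂ (Fin n),
      f ψ = (dotProduct (star (⇑ψ : Fin n → ℂ)) (H *ᵥ ⇑ψ)).re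
        + (dotProduct (star (⇑ψ : Fin n → ℂ)) (A *ᵥ ⇑ψ)).re := by
    intro ψ
    rw [hf]
    simp only [Matrix.add_mulVec, dotProduct_add, Complex.add_re]
  have hMp : ∀ ψ : EuclideanSpace ℂ (Fin n),
      (dotProduct (star (⇑ψ : Fin n → ℂ)) ((H + (b : ℂ) • absH) *ᵥ ⇑ψ)).re
        = (dotProduct (star (⇑ψ : Fin n → ℂ)) (H *ᵥ ⇑ψ)).re
          + b * (dotProduct (star (⇑ψ : Fin n → ℂ)) (absH *ᵥ ⇑ψ)).re := by
    intro ψ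
    rw [Matrix.add_mulVec, dotProduct_add, Complex.add_re, Matrix.smul_mulVec,
      dotProduct_smul]
    congr 1
    simp [Complex.real_smul]
  have hMm : ∀ ψ : EuclideanSpace ℂ (Fin n),
      (dotProduct (star (⇑ψ : Fin n → ℂ)) ((H - (b : ℂ) • absH) *ᵥ ⇑ψ)).re
        = (dotProduct (star (⇑ψ : Fin n → ℂ)) (H *ᵥ ⇑ψ)).re
          - b * (dotProduct (star (⇑ψ : Fin n → ℂ)) (absH *ᵥ ⇑ψ)).re := by
    intro ψ
    rw [Matrix.sub_mulVec, dotProduct_sub, Complex.sub_re, Matrix.smul_mulVec,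
      dotProduct_smul]
    congr 1
    simp [Complex.real_smul]
  intro k
  have hkn : (k : ℕ) < n := k.isLt
  have hcard1 : n < (Finset.Ici k).card + (Finset.Iic k).card := by
    rw [Fin.card_Ici, Fin.card_Iic]
    omega
  have hcard2 : n < (Finset.Iic k).card + (Finset.Ici k).card := by
    rw [Fin.card_Ici, Fin.card_Iic]
    omega
  -- upper bound : mu k ≤ lam k + b * |lam k| + a
  have hup : mu k ≤ lam k + b * |lam k| + a := by
    refine aux_key b₁ b₂ (Finset.Ici k) (Finset.Iic k) hcard1 f
      (lam k + b * |lam k| + a) (mu k) ?_ ?_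
    · intro ψ hψ
      have hA1 : (dotProduct (star (⇑ψ : Fin n → ℂ)) (A *ᵥ ⇑ψ)).re
          ≤ a * ‖ψ‖ ^ 2 + b * (dotProduct (star (⇑ψ : Fin n → ℂ)) (absH *ᵥ ⇑ψ)).re := by
        calc _ ≤ ‖dotProduct (star (⇑ψ : Fin n → ℂ)) (A *ᵥ ⇑ψ)‖ :=
              Complex.re_le_norm _
          _ ≤ _ := by rw [← hdotnorm ψ]; exact hbound ⇑ψ
      have hM1 : (dotProduct (star (⇑ψ : Fin n → ℂ)) ((H + (b : ℂ) • absH) *ᵥ ⇑ψ)).re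
          ≤ (lam k + b * |lam k|) * ‖ψ‖ ^ 2 := by
        refine aux_le_s13 _ (hH.add hsmulHerm) b₁ (fun i => lam i + b * |lam i|) heigMp
          (Finset.Ici k) _ ?_ hψ
        intro i hi
        exact (hmono _ _ (hlam (Finset.mem_Ici.mp hi))).1
      rw [hfsplit ψ]
      have := hMp ψ
      nlinarith [sq_nonneg ‖ψ‖]
    · intro ψ hψ
      refine aux_ge _ hT b₂ mu heigT (Finset.Iic k) _ ?_ hψ
      intro i hi
      exact hmu (Finset.mem_Iic.mp hi)
  -- lower bound : lam k - b * |lam k| - a ≤ mu k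
  have hlo : lam k - b * |lam k| - a ≤ mu k := by
    refine aux_key b₂ b₁ (Finset.Ici k) (Finset.Iic k) hcard1 f
      (mu k) (lam k - b * |lam k| - a) ?_ ?_
    · intro ψ hψ
      refine aux_le_s13 _ hT b₂ mu heigT (Finset.Ici k) _ ?_ hψ
      intro i hi
      exact hmu (Finset.mem_Ici.mp hi)
    · intro ψ hψ
      have hA1 : -(dotProduct (star (⇑ψ : Fin n → ℂ)) (A *ᵥ ⇑ψ)).re
          ≤ a * ‖ψ‖ ^ 2 + b * (dotProduct (star (⇑ψ : Fin n → ℂ)) (absH *ᵥ ⇑ψ)).re := by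
        calc -(dotProduct (star (⇑ψ : Fin n → ℂ)) (A *ᵥ ⇑ψ)).re
            ≤ ‖dotProduct (star (⇑ψ : Fin n → ℂ)) (A *ᵥ ⇑ψ)‖ :=
              (neg_le_abs _).trans (Complex.abs_re_le_norm _)
          _ ≤ _ := by rw [← hdotnorm ψ]; exact hbound ⇑ψ
      have hM1 : (lam k - b * |lam k|) * ‖ψ‖ ^ 2
          ≤ (dotProduct (star (⇑ψ : Fin n → ℂ)) ((H - (b : ℂ) • absH) *ᵥ ⇑ψ)).re := by
        refine aux_ge _ (hH.sub hsmulHerm) b₁ (fun i => lam i - b * |lam i|) heigMm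
          (Finset.Iic k) _ ?_ hψ
        intro i hi
        exact (hmono _ _ (hlam (Finset.mem_Iic.mp hi))).2
      rw [hfsplit ψ]
      have := hMm ψ
      nlinarith [sq_nonneg ‖ψ‖]
  rw [abs_sub_le_iff]
  constructor <;> linarith
end

section
/- Let D₊ and D₋ be bounded symmetric non-negative operators on Hilbert spaces 𝓗₊ and 𝓗₋ respectively, and U : 𝓗₋ → 𝓗₊ a unitary. Then the operator J + D, where J = [[0, U],[U*, 0]] and D = [[D₊, 0],[0, −D₋]] on 𝓗₊ ⊕ 𝓗₋, is invertible in B(𝓗₊ ⊕ 𝓗₋). -/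
set_option synthInstance.maxHeartbeats 1000000
set_option maxHeartbeats 1000000

open ContinuousLinearMap

/-- The 2×2 block operator `[[A, B],[C, D]]` on `Hp × Hm`. -/
noncomputable def block {Hp Hm : Type*}
    [NormedAddCommGroup Hp] [InnerProductSpace ℂ Hp] [CompleteSpace Hp]
    [NormedAddCommGroup Hm] [InnerProductSpace ℂ Hm] [CompleteSpace Hm]
    (A : Hp →L[ℂ] Hp) (B : Hm →L[ℂ] Hp) (C : Hp →L[ℂ] Hm) (D : Hm →L[ℂ] Hm) :
    (Hp × Hm) →L[ℂ] (Hp × Hm) :=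
  (A.comp (ContinuousLinearMap.fst ℂ Hp Hm) + B.comp (ContinuousLinearMap.snd ℂ Hp Hm)).prod
    (C.comp (ContinuousLinearMap.fst ℂ Hp Hm) + D.comp (ContinuousLinearMap.snd ℂ Hp Hm))

section Aux

/-- If `1 + b*a` is a unit then so is `1 + a*b`. -/
lemma aux_isUnit_one_add_swap {R : Type*} [Ring R] {a b : R} (h : IsUnit (1 + b * a)) :
    IsUnit (1 + a * b) := by
  obtain ⟨u, hu⟩ := h
  have h1 : (1 + b * a) * ↑u⁻¹ = 1 := by rw [← hu]; exact u.mul_inv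
  have h2 : (↑u⁻¹ : R) * (1 + b * a) = 1 := by rw [← hu]; exact u.inv_mul
  refine isUnit_iff_exists.mpr ⟨1 - a * ↑u⁻¹ * b, ?_, ?_⟩
  · have : a * ((1 + b * a) * ↑u⁻¹) * b = a * b := by rw [h1, mul_one]
    calc (1 + a * b) * (1 - a * ↑u⁻¹ * b)
        = 1 + a * b - a * ((1 + b * a) * ↑u⁻¹) * b := by noncomm_ring
      _ = 1 := by rw [h1]; noncomm_ring
  · calc (1 - a * ↑u⁻¹ * b) * (1 + a * b)
        = 1 + a * b - a * (↑u⁻¹ * (1 + b * a)) * b := by noncomm_ring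
      _ = 1 := by rw [h2]; noncomm_ring

variable {Hp Hm : Type*}
    [NormedAddCommGroup Hp] [InnerProductSpace ℂ Hp] [CompleteSpace Hp]
    [NormedAddCommGroup Hm] [InnerProductSpace ℂ Hm] [CompleteSpace Hm]

lemma aux_isUnit_one_add_of_nonneg {a : Hp →L[ℂ] Hp} (ha : 0 ≤ a) : IsUnit (1 + a) := by
  have h : (-1 : ℝ) ∉ spectrum ℝ a := by
    intro hx
    have := spectrum_nonneg_of_nonneg ha hx
    linarith
  have h2 := spectrum.notMem_iff.mp h
  have h3 : (algebraMap ℝ (Hp →L[ℂ] Hp)) (-1) - a = -(1 + a) := by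
    simp [map_neg, map_one]; abel
  rw [h3] at h2
  simpa using h2.neg

/-- `1 + p * q` is a unit when `p, q ≥ 0`. -/
lemma aux_isUnit_one_add_mul_nonneg {p q : Hp →L[ℂ] Hp} (hp : 0 ≤ p) (hq : 0 ≤ q) :
    IsUnit (1 + p * q) := by
  set r := CFC.sqrt p with hr
  have hr0 : 0 ≤ r := CFC.sqrt_nonneg (a := p)
  have hrr : r * r = p := CFC.sqrt_mul_sqrt_self p hp
  have key : IsUnit (1 + (r * q) * r) := by
    have : (1 : Hp →L[ℂ] Hp) + (r * q) * r = 1 + star r * q * r := by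
      rw [(IsSelfAdjoint.of_nonneg hr0).star_eq]
    rw [this]
    exact aux_isUnit_one_add_of_nonneg (star_left_conjugate_nonneg hq r)
  have h2 : IsUnit (1 + r * (r * q)) := aux_isUnit_one_add_swap key
  rwa [← mul_assoc, hrr] at h2

end Aux

section Block

variable {Hp Hm : Type*}
    [NormedAddCommGroup Hp] [InnerProductSpace ℂ Hp] [CompleteSpace Hp]
    [NormedAddCommGroup Hm] [InnerProductSpace ℂ Hm] [CompleteSpace Hm]

lemma block_apply (A : Hp →L[ℂ] Hp) (B : Hm →L[ℂ] Hp) (C : Hp →L[ℂ] Hm) (D : Hm →L[ℂ] Hm)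
    (x : Hp × Hm) : block A B C D x = (A x.1 + B x.2, C x.1 + D x.2) := rfl

lemma block_mul (A A' : Hp →L[ℂ] Hp) (B B' : Hm →L[ℂ] Hp) (C C' : Hp →L[ℂ] Hm)
    (D D' : Hm →L[ℂ] Hm) :
    block A B C D ∘L block A' B' C' D' =
      block (A ∘L A' + B ∘L C') (A ∘L B' + B ∘L D')
        (C ∘L A' + D ∘L C') (C ∘L B' + D ∘L D') := by
  ext x <;>
    (simp only [ContinuousLinearMap.comp_apply, block_apply, ContinuousLinearMap.add_apply,
      map_add]; abel)

lemma block_one : block (1 : Hp →L[ℂ] Hp) 0 0 (1 : Hm →L[ℂ] Hm) = 1 := by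
  ext x <;> simp [block_apply]

lemma isUnit_block_lowerTriangular (X : Hp →L[ℂ] Hm) :
    IsUnit (block (1 : Hp →L[ℂ] Hp) 0 X 1) := by
  refine isUnit_iff_exists.mpr ⟨block (1 : Hp →L[ℂ] Hp) 0 (-X) 1, ?_, ?_⟩ <;>
  · show _ ∘L _ = _
    ext x <;> simp [block_apply]

lemma isUnit_block_diag {T : Hp →L[ℂ] Hp} (hT : IsUnit T) :
    IsUnit (block T 0 0 (1 : Hm →L[ℂ] Hm)) := by
  obtain ⟨u, hu⟩ := hT
  have h1 : T ∘L (↑u⁻¹ : Hp →L[ℂ] Hp) = 1 := by rw [← hu]; exact u.mul_inv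
  have h2 : (↑u⁻¹ : Hp →L[ℂ] Hp) ∘L T = 1 := by rw [← hu]; exact u.inv_mul
  refine isUnit_iff_exists.mpr ⟨block (↑u⁻¹ : Hp →L[ℂ] Hp) 0 0 1, ?_, ?_⟩
  · show _ ∘L _ = _
    ext x <;>
      simp [block_apply, show ∀ y, T ((↑u⁻¹ : Hp →L[ℂ] Hp) y) = y from fun y => by
          simpa using ContinuousLinearMap.ext_iff.mp h1 y]
  · show _ ∘L _ = _
    ext x <;>
      simp [block_apply, show ∀ y, (↑u⁻¹ : Hp →L[ℂ] Hp) (T y) = y from fun y => by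
          simpa using ContinuousLinearMap.ext_iff.mp h2 y]

end Block

/-- Invertibility of `J + D = [[D₊, U],[U*, −D₋]]` for `D₊, D₋` bounded non-negative
selfadjoint and `U` unitary (used in the proof of Theorem 2.15). -/
theorem stmt_16 {Hp Hm : Type*}
    [NormedAddCommGroup Hp] [InnerProductSpace ℂ Hp] [CompleteSpace Hp]
    [NormedAddCommGroup Hm] [InnerProductSpace ℂ Hm] [CompleteSpace Hm]
    (Dp : Hp →L[ℂ] Hp) (Dm : Hm →L[ℂ] Hm) (U : Hm →L[ℂ] Hp)
    (hDp : Dp.IsPositive) (hDm : Dm.IsPositive)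
    (hU1 : (adjoint U) ∘L U = 1) (hU2 : U ∘L (adjoint U) = 1) :
    IsUnit (block Dp U (adjoint U) (-Dm)) := by
  have hU1' : ∀ y : Hm, adjoint U (U y) = y := fun y => by
    have := ContinuousLinearMap.ext_iff.mp hU1 y
    simpa using this
  have hU2' : ∀ x : Hp, U (adjoint U x) = x := fun x => by
    have := ContinuousLinearMap.ext_iff.mp hU2 x
    simpa using this
  set X : Hp →L[ℂ] Hm := -(Dm ∘L adjoint U) with hX
  set Y : Hp →L[ℂ] Hm := (adjoint U) ∘L Dp with hY
  set T : Hp →L[ℂ] Hp := 1 + (U ∘L Dm ∘L adjoint U) ∘L Dp with hTdef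
  -- T is invertible
  have hT : IsUnit T := by
    have hp : (0 : Hp →L[ℂ] Hp) ≤ U ∘L Dm ∘L adjoint U :=
      (nonneg_iff_isPositive _).mpr (hDm.conj_adjoint U)
    have hq : (0 : Hp →L[ℂ] Hp) ≤ Dp := (nonneg_iff_isPositive _).mpr hDp
    have := aux_isUnit_one_add_mul_nonneg hp hq
    rwa [show (U ∘L Dm ∘L adjoint U) * Dp = (U ∘L Dm ∘L adjoint U) ∘L Dp from rfl,
      ← hTdef] at this
  -- J is invertible
  have hJ : IsUnit (block (0 : Hp →L[ℂ] Hp) U (adjoint U) 0) := by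
    refine isUnit_iff_exists.mpr ⟨block (0 : Hp →L[ℂ] Hp) U (adjoint U) 0, ?_, ?_⟩ <;>
    · show _ ∘L _ = _
      ext x <;> simp [block_apply, hU1', hU2']
  -- factorization
  have hfact : block Dp U (adjoint U) (-Dm) =
      block (1 : Hp →L[ℂ] Hp) 0 X 1 ∘L
        (block (0 : Hp →L[ℂ] Hp) U (adjoint U) 0 ∘L
          (block T 0 0 (1 : Hm →L[ℂ] Hm) ∘L block (1 : Hp →L[ℂ] Hp) 0 Y 1)) := by
    ext x <;>
      simp [block_apply, hX, hY, hTdef, hU1', hU2', map_add, add_comm, add_left_comm]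
  rw [hfact]
  exact (isUnit_block_lowerTriangular X).mul (hJ.mul ((isUnit_block_diag hT).mul
    (isUnit_block_lowerTriangular Y)))
end

section
/- Let H be a selfadjoint operator with spectral gap (λ₋, λ₊) (λ₋ < λ₊, possibly infinite, with (λ₋,λ₊) ⊆ ρ(H)), and let a ≥ 0, 0 ≤ b < 1. If d ∈ (λ₋ + a + b|λ₋|, λ₊ − a − b|λ₊|) (assumed non-void), then sup over λ ∈ σ(H) of (a + b|λ|)/|λ − d| < 1. -/
lemma aux_left (a b d l x : ℝ) (ha : 0 ≤ a) (hb0 : 0 ≤ b)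
    (hx : x ≤ l) (hl : l + a + b * |l| < d) :
    (a + b * |x|) / |x - d| ≤ max b ((a + b * |l|) / (d - l)) := by
  have habs : 0 ≤ a + b * |l| := by positivity
  have hdl : 0 < d - l := by linarith
  have hdx : 0 < d - x := by linarith
  have hxd : |x - d| = d - x := by
    rw [abs_sub_comm, abs_of_pos hdx]
  set K := (a + b * |l|) / (d - l) with hKdef
  have hK : K * (d - l) = a + b * |l| := div_mul_cancel₀ _ (ne_of_gt hdl)
  have hK0 : 0 ≤ K := div_nonneg habs hdl.le
  have hcK : K ≤ max b K := le_max_right _ _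
  have hcb : b ≤ max b K := le_max_left _ _
  rw [hxd, div_le_iff₀ hdx]
  rcases le_or_gt 0 x with hx0 | hx0
  · have hl0 : 0 ≤ l := le_trans hx0 hx
    rw [abs_of_nonneg hx0]
    rw [abs_of_nonneg hl0] at hK
    have key : a + b * x ≤ K * (d - x) := by
      nlinarith [mul_nonneg (sub_nonneg.2 hx) (add_nonneg hb0 hK0)]
    calc a + b * x ≤ K * (d - x) := key
      _ ≤ max b K * (d - x) := by nlinarith
  · rw [abs_of_neg hx0]
    rcases le_or_gt l 0 with hl0 | hl0
    · rw [abs_of_nonpos hl0] at hK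
      nlinarith [mul_le_mul_of_nonneg_right hcK hdl.le,
        mul_le_mul_of_nonneg_right hcb (sub_nonneg.2 hx)]
    · rw [abs_of_pos hl0] at hK
      have hd0 : 0 < d := by nlinarith
      nlinarith [mul_le_mul_of_nonneg_right hcK hd0.le,
        mul_le_mul_of_nonneg_right hcb (by linarith : (0:ℝ) ≤ -x),
        mul_nonneg hK0 hl0.le]

lemma aux_right (a b d l x : ℝ) (ha : 0 ≤ a) (hb0 : 0 ≤ b)
    (hx : l ≤ x) (hl : d < l - a - b * |l|) :
    (a + b * |x|) / |x - d| ≤ max b ((a + b * |l|) / (l - d)) := by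
  have := aux_left a b (-d) (-l) (-x) ha hb0 (by linarith)
    (by rw [abs_neg]; linarith)
  simpa [abs_sub_comm, neg_add_eq_sub, sub_neg_eq_add, abs_neg,
    show -x - -d = -(x - d) by ring, show -d - -l = l - d by ring] using this

/-- The key estimate in Theorem 3.1: if the spectrum `S = σ(H)` avoids the
(possibly infinite) gap `(λ₋, λ₊)` and `d` lies in the shrunken interval
`(λ₋ + a + b|λ₋|, λ₊ − a − b|λ₊|)` (a condition which is void at an infinite end),
then `sup_{λ ∈ σ(H)} (a + b|λ|)/|λ − d| < 1`. -/
theorem stmt_19 (S : Set ℝ) (lm lp : EReal) (hlt : lm < lp)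
    (hgap : ∀ x ∈ S, (x : EReal) ≤ lm ∨ lp ≤ (x : EReal))
    (a b d : ℝ) (ha : 0 ≤ a) (hb0 : 0 ≤ b) (hb : b < 1)
    (hdm : ∀ l : ℝ, (l : EReal) = lm → l + a + b * |l| < d)
    (hdp : ∀ l : ℝ, (l : EReal) = lp → d < l - a - b * |l|)
    (hd : lm < (d : EReal) ∧ (d : EReal) < lp) :
    sSup ((fun x => (a + b * |x|) / |x - d|) '' S) < 1 := by
  -- construct a uniform bound on the left part
  have hcL : ∃ cL : ℝ, cL < 1 ∧ b ≤ cL ∧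
      ∀ x : ℝ, (x : EReal) ≤ lm → (a + b * |x|) / |x - d| ≤ cL := by
    induction lm using EReal.rec with
    | bot => exact ⟨b, hb, le_refl _, fun x hx => absurd hx (by simp)⟩
    | top => exact absurd hlt (by simp)
    | coe l =>
      have hld := hdm l rfl
      refine ⟨max b ((a + b * |l|) / (d - l)), ?_, le_max_left _ _, ?_⟩
      · have hdl : 0 < d - l := by nlinarith [abs_nonneg l]
        rw [max_lt_iff]
        exact ⟨hb, by rw [div_lt_one hdl]; linarith⟩
      · intro x hx
        exact aux_left a b d l x ha hb0 (by exact_mod_cast hx) hld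
  have hcR : ∃ cR : ℝ, cR < 1 ∧ b ≤ cR ∧
      ∀ x : ℝ, lp ≤ (x : EReal) → (a + b * |x|) / |x - d| ≤ cR := by
    induction lp using EReal.rec with
    | top => exact ⟨b, hb, le_refl _, fun x hx => absurd hx (by simp)⟩
    | bot => exact absurd hlt (by simp)
    | coe l =>
      have hld := hdp l rfl
      refine ⟨max b ((a + b * |l|) / (l - d)), ?_, le_max_left _ _, ?_⟩
      · have hdl : 0 < l - d := by nlinarith [abs_nonneg l]
        rw [max_lt_iff]
        exact ⟨hb, by rw [div_lt_one hdl]; linarith⟩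
      · intro x hx
        exact aux_right a b d l x ha hb0 (by exact_mod_cast hx) hld
  obtain ⟨cL, hcL1, hcLb, hcLx⟩ := hcL
  obtain ⟨cR, hcR1, hcRb, hcRx⟩ := hcR
  have hc1 : max cL cR < 1 := max_lt hcL1 hcR1
  refine lt_of_le_of_lt (Real.sSup_le ?_ (le_trans (le_trans hb0 hcLb) (le_max_left _ _))) hc1
  rintro y ⟨x, hxS, rfl⟩
  rcases hgap x hxS with h | h
  · exact le_trans (hcLx x h) (le_max_left _ _)
  · exact le_trans (hcRx x h) (le_max_right _ _)
end
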